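/- Let D be a linear operator on ℝ^n with no negative real eigenvalue, λ ∈ (0,1), and κ ∈ ℝ. Then the operator (λ−λ²)·Id + (1−2λ+2λ²+κ²)·D + (λ−λ²)·D² is injective. -/

import Mathlib

/-- If `D` is a linear operator on `ℝⁿ` with no negative real eigenvalue, `λ ∈ (0,1)`
and `κ ∈ ℝ`, then `(λ−λ²)·Id + (1−2λ+2λ²+κ²)·D + (λ−λ²)·D²` is injective. -/
theorem operator_poly_injective {n : ℕ} (D : (Fin n → ℝ) →ₗ[ℝ] (Fin n → ℝ))
    (hD : ∀ μ : ℝ, μ < 0 → ∀ v, D v = μ • v → v = 0)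
    (lam κ : ℝ) (h0 : 0 < lam) (h1 : lam < 1) :
    Function.Injective
      ⇑((lam - lam ^ 2) • (LinearMap.id : (Fin n → ℝ) →ₗ[ℝ] (Fin n → ℝ))
        + (1 - 2 * lam + 2 * lam ^ 2 + κ ^ 2) • D
        + (lam - lam ^ 2) • (D ∘ₗ D)) := by
  set a := lam - lam ^ 2 with ha_def
  set b := 1 - 2 * lam + 2 * lam ^ 2 + κ ^ 2 with hb_def
  have ha : 0 < a := by nlinarith
  have hba : 2 * a ≤ b := by nlinarith [sq_nonneg (1 - 2 * lam), sq_nonneg κ]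
  set c := b / a with hc_def
  have hc : 2 ≤ c := (le_div_iff₀ ha).2 (by linarith)
  have hac : a * c = b := by rw [hc_def]; field_simp [ha.ne']
  set d := Real.sqrt (c ^ 2 - 4) with hd_def
  have hd2 : d ^ 2 = c ^ 2 - 4 := Real.sq_sqrt (by nlinarith)
  have hdnn : 0 ≤ d := Real.sqrt_nonneg _
  set r := (c + d) / 2 with hr_def
  set s := (c - d) / 2 with hs_def
  have hrs : r * s = 1 := by
    rw [hr_def, hs_def]; nlinarith
  have hsum : r + s = c := by rw [hr_def, hs_def]; ring
  have hr : 0 < r := by rw [hr_def]; linarith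
  have hs : 0 < s := by nlinarith
  refine LinearMap.ker_eq_bot.mp (LinearMap.ker_eq_bot'.mpr ?_)
  intro v hv
  have hv' : a • v + b • D v + a • D (D v) = 0 := by
    simpa using hv
  have key : D (D v) + c • D v + v = 0 := by
    have h1 : a • (D (D v) + c • D v + v) = 0 := by
      rw [smul_add, smul_add, smul_smul, hac]
      linear_combination (norm := module) hv'
    rcases smul_eq_zero.mp h1 with h | h
    · exact absurd h (ne_of_gt ha)
    · exact h
  set w := D v + s • v with hw_def
  have hw : D w = (-r) • w := by
    rw [hw_def, map_add, map_smul]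
    have hDDv : D (D v) = -(c • D v) - v := by
      linear_combination (norm := module) key
    rw [hDDv]
    have h1 : s - c = -r := by linarith
    have h2 : (-r) * s = -1 := by linarith [hrs]
    match_scalars <;> nlinarith [hrs]
  have hw0 : w = 0 := hD (-r) (by linarith) w hw
  have hDv : D v = (-s) • v := by
    have : D v + s • v = 0 := hw0
    linear_combination (norm := module) this
  exact hD (-s) (by linarith) v hDv
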